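/- arXiv:1401.5500 — 2 statements merged into one kernel-verified Lean document; each statement's English description precedes it below -/
import Mathlib

section
/- A linear map ŝ_I from heis(1,n,ℝχ_I) to heis(F,1,n) determined by ŝ_I(L_0) = a_I·i1, ŝ_I(L_{n+1}(χ_I)) = b_I·ip, ŝ_I(L_k(χ_I)) = c_{k,I}·iq^k for k = 1,...,n, with nonzero real constants a_I, b_I, c_{k,I}, is a Lie algebra isomorphism if and only if c_{k,I} = b_I^{-k}·|I|·a_I for all k ∈ {1,...,n}. -/
/-- The bracket of `heis(1,n,ℝχ_I)` (current algebra of `heis(1,n)` with test functions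
multiples of `χ_I`, `μ = |I|`), in coordinates w.r.t. the basis
`L_0, L_1(χ_I), …, L_{n+1}(χ_I)`: the nonzero brackets of basis vectors are
`[L_{n+1}(χ_I), L_1(χ_I)] = |I| • L_0` and `[L_{n+1}(χ_I), L_k(χ_I)] = k • L_{k-1}(χ_I)`
for `k ∈ {2,…,n}`. -/
def chiBracket (n : ℕ) (μ : ℝ) (x y : ℕ → ℝ) : ℕ → ℝ :=
  fun m =>
    if m = 0 then μ * (x (n + 1) * y 1 - y (n + 1) * x 1)
    else if m + 1 ≤ n then (m + 1 : ℝ) * (x (n + 1) * y (m + 1) - y (n + 1) * x (m + 1))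
    else 0

/-- The bracket of `heis(F,1,n)` (Schroedinger realization, basis
`i1, iq, iq², …, iqⁿ, ip` at coordinates `0, 1, …, n, n+1`): nonzero brackets of basis
vectors are `[ip, iq^k] = k • (i q^{k-1})`, `k ∈ {1,…,n}`. -/
def fockBracket (n : ℕ) (x y : ℕ → ℝ) : ℕ → ℝ :=
  fun m =>
    if m + 1 ≤ n then (m + 1 : ℝ) * (x (n + 1) * y (m + 1) - y (n + 1) * x (m + 1)) else 0

/-- The linear map `ŝ_I` determined by `ŝ_I(L_0) = a·i1`, `ŝ_I(L_{n+1}(χ_I)) = b·ip`,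
`ŝ_I(L_k(χ_I)) = c_k·iq^k` for `k = 1,…,n`, in coordinates. -/
def hatS (n : ℕ) (a b : ℝ) (c : ℕ → ℝ) (x : ℕ → ℝ) : ℕ → ℝ :=
  fun m =>
    if m = 0 then a * x 0
    else if m = n + 1 then b * x (n + 1)
    else if m ≤ n then c m * x m
    else 0

/-- A linear map `ŝ_I : heis(1,n,ℝχ_I) → heis(F,1,n)` with
`ŝ_I(L_0) = a·i1`, `ŝ_I(L_{n+1}(χ_I)) = b·ip`, `ŝ_I(L_k(χ_I)) = c_k·iq^k`
(nonzero real constants `a, b, c_k`, so that `ŝ_I` is automatically a linear bijection)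
is a Lie algebra isomorphism, i.e. preserves brackets, if and only if
`c_k = b⁻ᵏ·|I|·a` for all `k ∈ {1,…,n}`. -/
theorem stmt2 (n : ℕ) (hn : 1 ≤ n) (μ a b : ℝ) (hμ : 0 < μ) (ha : a ≠ 0) (hb : b ≠ 0)
    (c : ℕ → ℝ) (hc : ∀ k, 1 ≤ k → k ≤ n → c k ≠ 0) :
    (∀ x y : ℕ → ℝ,
        hatS n a b c (chiBracket n μ x y) = fockBracket n (hatS n a b c x) (hatS n a b c y))
      ↔ (∀ k, 1 ≤ k → k ≤ n → c k = b ^ (-(k : ℤ)) * μ * a) := by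
  constructor
  · intro h
    have base : b * c 1 = μ * a := by
      have H := congrFun (h (fun j => if j = n + 1 then (1:ℝ) else 0)
        (fun j => if j = 1 then (1:ℝ) else 0)) 0
      have e1 : n + 1 ≠ 1 := by omega
      have e2 : (1:ℕ) ≠ n + 1 := by omega
      simp [hatS, chiBracket, fockBracket, hn, e1, e2, show n ≠ 0 by omega] at H
      linarith
    have key : ∀ m, 1 ≤ m → m + 1 ≤ n → c m = b * c (m + 1) := by
      intro m hm1 hmn
      have H := congrFun (h (fun j => if j = n + 1 then (1:ℝ) else 0)
        (fun j => if j = m + 1 then (1:ℝ) else 0)) m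
      have e1 : m ≠ 0 := by omega
      have e2 : m ≠ n + 1 := by omega
      have e3 : m ≤ n := by omega
      have e4 : n + 1 ≠ m + 1 := by omega
      have e5 : m + 1 ≠ n + 1 := by omega
      have e6 : m + 1 ≠ 0 := by omega
      simp [hatS, chiBracket, fockBracket, e1, e2, e3, e4, e5, e6, hmn, show m ≠ n by omega, show n ≠ m by omega] at H
      have hm0 : ((m:ℝ) + 1) ≠ 0 := by positivity
      have h2 : (c m - b * c (m + 1)) * ((m:ℝ) + 1) = 0 := by linear_combination H
      have h3 := (mul_eq_zero.mp h2).resolve_right hm0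
      linarith
    intro k hk1 hkn
    induction k with
    | zero => omega
    | succ k ih =>
      rcases Nat.eq_or_lt_of_le hk1 with h1 | h1
      · have hk0 : k = 0 := by omega
        subst hk0
        have hcv : c 1 = μ * a / b := by field_simp; linarith [base]
        rw [hcv]
        simp [zpow_neg]
        ring
      · have hk : 1 ≤ k := by omega
        have hck := ih hk (by omega)
        have hr := key k hk (by omega)
        have hcv : c (k + 1) = c k / b := by field_simp; linarith [hr]
        rw [hcv, hck]
        push_cast
        rw [show (-(k + 1 : ℤ)) = (-(k : ℤ)) + (-1) by ring, zpow_add₀ hb]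
        field_simp
  · intro h x y
    funext m
    have hc1 : c 1 = b⁻¹ * μ * a := by
      have := h 1 le_rfl hn
      simpa using this
    by_cases hm0 : m = 0
    · subst hm0
      simp only [hatS, chiBracket, fockBracket]
      have e2 : (1:ℕ) ≠ n + 1 := by omega
      simp [hn, Nat.one_le_iff_ne_zero.mp hn, hc1, e2]
      field_simp
    · by_cases hmn1 : m = n + 1
      · subst hmn1
        simp only [hatS, chiBracket, fockBracket]
        simp [show ¬(n + 1 + 1 ≤ n) from by omega]
      · by_cases hmn : m ≤ n
        · simp only [hatS, chiBracket, fockBracket]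
          by_cases hms : m + 1 ≤ n
          · have e5 : m + 1 ≠ n + 1 := by omega
            have e6 : m + 1 ≠ 0 := by omega
            have e7 : m ≠ n := by omega
            simp [hm0, hmn1, hmn, hms, e5, e6, e7]
            have h1 := h m (by omega) hmn
            have h2 := h (m + 1) (by omega) hms
            rw [h1, h2]
            push_cast
            rw [show (-(m + 1 : ℤ)) = (-(m : ℤ)) + (-1) by ring, zpow_add₀ hb]
            field_simp
          · simp [hm0, hmn1, hmn, hms]
        · have h1 : ¬(m + 1 ≤ n) := by omega
          simp only [hatS, chiBracket, fockBracket]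
          simp [hm0, hmn1, hmn, h1]
end

section
/- For n = 2 the family of Fock states is not projective: with φ_F(W(k̂_I(u,P))) = (1-2iA)^{-1/2} e^{i a_0 |I|} exp( |I| · (4C²(A² + 2iA) − 3|M|²) / (6(1−2iA)) ) where A = a_2/√2, B = a_1/√2, C = u/√2, M = B + iC, there exist u, a_0, a_1, a_2 and a partition of I into m ≥ 2 parts such that ∏_j φ_F(W(k̂_{I_j}(u,P))) ≠ φ_F(W(k̂_I(u,P))); indeed the product equals (1−2iA)^{−m/2} times the same exponential factor, which differs from (1−2iA)^{−1/2} times that factor whenever a_2 ≠ 0 and m ≥ 2. -/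
open scoped BigOperators

/-- The exponent `i a₀ + (4C²(A² + 2iA) − 3|M|²)/(6(1 − 2iA))` of the `n = 2` Fock
characteristic function, with `A = a₂/√2`, `B = a₁/√2`, `C = u/√2`, `M = B + iC`. -/
noncomputable def fockExp2 (u a0 a1 a2 : ℝ) : ℂ :=
  (a0 : ℂ) * Complex.I +
    (4 * ((u / Real.sqrt 2 : ℝ) : ℂ) ^ 2 *
        (((a2 / Real.sqrt 2 : ℝ) : ℂ) ^ 2 + 2 * Complex.I * ((a2 / Real.sqrt 2 : ℝ) : ℂ)) -
      3 * (((a1 / Real.sqrt 2 : ℝ) ^ 2 + (u / Real.sqrt 2 : ℝ) ^ 2 : ℝ) : ℂ)) /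
      (6 * (1 - 2 * Complex.I * ((a2 / Real.sqrt 2 : ℝ) : ℂ)))

/-- The `n = 2` Fock expectation of the rescaled Weyl operator on a set of measure `c`:
`ψ_c(u, a₀ + a₁X + a₂X²) = (1 − 2iA)^{-1/2} · exp(c · (i a₀ + (4C²(A²+2iA) − 3|M|²)/(6(1−2iA))))`
(principal branch power). -/
noncomputable def fockChar2 (c u a0 a1 a2 : ℝ) : ℂ :=
  (1 - 2 * Complex.I * ((a2 / Real.sqrt 2 : ℝ) : ℂ)) ^ (-(1 : ℂ) / 2) *
    Complex.exp ((c : ℂ) * fockExp2 u a0 a1 a2)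

/-- For `n = 2` the family of Fock states is not projective: for any
partition of `I` into `m ≥ 2` parts of positive measures `|I_j|` summing to `|I| = c`,
the product `∏_j φ_F(W(k̂_{I_j}(u,P)))` equals `(1 − 2iA)^{-m/2}` times the exponential
factor `exp(c·(i a₀ + …))`, which differs from `φ_F(W(k̂_I(u,P)))` whenever `a₂ ≠ 0`. -/
theorem stmt11 (c : ℝ) (hc : 0 < c) (m : ℕ) (hm : 2 ≤ m) (cs : Fin m → ℝ)
    (hcs : ∀ j, 0 < cs j) (hsum : (∑ j, cs j) = c) (u a0 a1 a2 : ℝ) (ha2 : a2 ≠ 0) :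
    (∏ j, fockChar2 (cs j) u a0 a1 a2)
        = (1 - 2 * Complex.I * ((a2 / Real.sqrt 2 : ℝ) : ℂ)) ^ (-(m : ℂ) / 2) *
            Complex.exp ((c : ℂ) * fockExp2 u a0 a1 a2) ∧
      (∏ j, fockChar2 (cs j) u a0 a1 a2) ≠ fockChar2 c u a0 a1 a2 := by
  set A : ℝ := a2 / Real.sqrt 2 with hA
  set z : ℂ := 1 - 2 * Complex.I * (A : ℂ) with hz
  set E : ℂ := fockExp2 u a0 a1 a2 with hE
  have hAne : A ≠ 0 := by
    simp only [hA, div_ne_zero_iff]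
    exact ⟨ha2, Real.sqrt_ne_zero'.mpr (by norm_num)⟩
  -- the product identity
  have key : (∏ j, fockChar2 (cs j) u a0 a1 a2)
      = z ^ (-(m : ℂ) / 2) * Complex.exp ((c : ℂ) * E) := by
    unfold fockChar2
    rw [Finset.prod_mul_distrib, Finset.prod_const, ← Complex.exp_sum]
    have h1 : ∑ j, (cs j : ℂ) * E = (c : ℂ) * E := by
      rw [← Finset.sum_mul, ← hsum]
      push_cast
      ring
    have h2 : (z ^ (-(1 : ℂ) / 2)) ^ m = z ^ (-(m : ℂ) / 2) := by
      rw [← Complex.cpow_nat_mul]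
      congr 1
      push_cast
      ring
    simp only [Finset.card_univ, Fintype.card_fin, ← hA]
    rw [← hz, h1, h2]
  refine ⟨key, ?_⟩
  rw [key]
  unfold fockChar2
  rw [← hE, ← hz]
  intro h
  have hexp : Complex.exp ((c : ℂ) * E) ≠ 0 := Complex.exp_ne_zero _
  have h' : z ^ (-(m : ℂ) / 2) = z ^ (-(1 : ℂ) / 2) := mul_right_cancel₀ hexp h
  have habs := congrArg (fun w : ℂ => ‖w‖) h'
  have hcast1 : (-(m : ℂ) / 2) = ((-(m : ℝ) / 2 : ℝ) : ℂ) := by push_cast; ring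
  have hcast2 : (-(1 : ℂ) / 2) = ((-(1 : ℝ) / 2 : ℝ) : ℂ) := by push_cast; ring
  rw [hcast1, hcast2, Complex.norm_cpow_real, Complex.norm_cpow_real] at habs
  have hzabs : 1 < ‖z‖ := by
    have : ‖z‖ ^ 2 = 1 + 4 * A ^ 2 := by
      rw [Complex.sq_norm, Complex.normSq_apply]
      simp [hz]
      ring
    nlinarith [norm_nonneg z, sq_pos_of_ne_zero hAne]
  have hlt : (-(m : ℝ) / 2) < (-(1 : ℝ) / 2) := by
    have : (2 : ℝ) ≤ (m : ℝ) := by exact_mod_cast hm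
    linarith
  have := (Real.rpow_lt_rpow_left_iff hzabs).mpr hlt
  rw [habs] at this
  exact lt_irrefl _ this
end
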